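/- Let a, b, c, d, e, f be positive real numbers and let V_{f,e,d,c,b,a}(x,y) = (af + (a+bf)x + (f+ae)y + bx² + ey² + cx²y + dxy²)/(xy) on Q⁺. For a point (x,y) ∈ Q⁺ the following three conditions are equivalent: (1) (x,y) is a fixed point of the composition map F_{f,e,d,c,b,a} = F_f ∘ F_e ∘ F_d ∘ F_c ∘ F_b ∘ F_a; (2) both partial derivatives of V_{f,e,d,c,b,a} vanish at (x,y); (3) y²·(e+dx) = (f+x)(a+bx) and x²·(b+cy) = (a+y)(f+ey). Moreover, F_{f,e,d,c,b,a} has at least one fixed point in Q⁺. -/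

import Mathlib

/-- The Lyness map `F_a(x,y) = (y, (a+y)/x)`. -/
noncomputable def lyness (a : ℝ) (p : ℝ × ℝ) : ℝ × ℝ := (p.2, (a + p.2) / p.1)

/-- The rational function `V_{f,e,d,c,b,a}(x,y)` of Corollary 3 of the paper. -/
noncomputable def lynessV (a b c d e f x y : ℝ) : ℝ :=
  (a * f + (a + b * f) * x + (f + a * e) * y + b * x ^ 2 + e * y ^ 2 +
      c * x ^ 2 * y + d * x * y ^ 2) / (x * y)

set_option maxHeartbeats 800000

lemma lyness_fixed_iff (a b c d e f x y : ℝ)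
    (ha : 0 < a) (hb : 0 < b) (hc : 0 < c) (hd : 0 < d) (hf : 0 < f)
    (hx : 0 < x) (hy : 0 < y) :
    (lyness f ∘ lyness e ∘ lyness d ∘ lyness c ∘ lyness b ∘ lyness a) (x, y) = (x, y) ↔
      (y ^ 2 * (e + d * x) = (f + x) * (a + b * x) ∧
        x ^ 2 * (b + c * y) = (a + y) * (f + e * y)) := by
  obtain ⟨s2, hs2⟩ : ∃ t : ℝ, t = (a + y) / x := ⟨_, rfl⟩
  obtain ⟨s3, hs3⟩ : ∃ t : ℝ, t = (b + s2) / y := ⟨_, rfl⟩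
  obtain ⟨s4, hs4⟩ : ∃ t : ℝ, t = (c + s3) / s2 := ⟨_, rfl⟩
  obtain ⟨s5, hs5⟩ : ∃ t : ℝ, t = (d + s4) / s3 := ⟨_, rfl⟩
  have hp2 : 0 < s2 := by rw [hs2]; positivity
  have hp3 : 0 < s3 := by rw [hs3]; exact div_pos (by linarith) hy
  have hp4 : 0 < s4 := by rw [hs4]; exact div_pos (by linarith) hp2
  have hp5 : 0 < s5 := by rw [hs5]; exact div_pos (by linarith) hp3
  have hA : x * s2 = a + y := by rw [hs2]; field_simp
  have hB : y * s3 = b + s2 := by rw [hs3]; field_simp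
  have hC : s2 * s4 = c + s3 := by rw [hs4]; field_simp
  have hD : s3 * s5 = d + s4 := by rw [hs5]; field_simp
  have hcomp : (lyness f ∘ lyness e ∘ lyness d ∘ lyness c ∘ lyness b ∘ lyness a) (x, y)
      = ((e + s5) / s4, (f + (e + s5) / s4) / s5) := by
    simp only [Function.comp_apply, lyness, hs2, hs3, hs4, hs5]
  rw [hcomp, Prod.mk.injEq]
  constructor
  · rintro ⟨h6, h7⟩
    rw [h6] at h7
    rw [div_eq_iff hp4.ne'] at h6
    rw [div_eq_iff hp5.ne'] at h7
    have hE : s4 * x = e + s5 := by linear_combination -h6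
    have hF : s5 * y = f + x := by linear_combination -h7
    constructor
    · linear_combination (-(y^2))*hE + (-(y^2*x))*hD + (s5*y)*hA + (s5*y*x)*hB + (a+b*x)*hF
    · linear_combination (-(x^2))*hB + (-(x^2*y))*hC + (x*s2)*hF + (x*s2*y)*hE + (f+e*y)*hA
  · rintro ⟨hq1, hq2⟩
    have hE : s4 * x = e + s5 := by
      rw [hs5, hs4, hs3, hs2]
      field_simp
      linear_combination (-(a+y))*hq1 + (a+b*x)*hq2
    have hF : s5 * y = f + x := by
      rw [hs5, hs4, hs3, hs2]
      field_simp
      linear_combination (a+y)*hq1 + y*hq2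
    constructor
    · rw [div_eq_iff hp4.ne']; linear_combination -hE
    · rw [div_eq_iff hp5.ne']
      have h6 : (e + s5) / s4 = x := by rw [div_eq_iff hp4.ne']; linear_combination -hE
      rw [h6]; linear_combination -hF

lemma lynessV_derivX (a b c d e f x y : ℝ) (hx : x ≠ 0) (hy : y ≠ 0) :
    deriv (fun s => lynessV a b c d e f s y) x
      = (y * (x ^ 2 * (b + c * y) - (a + y) * (f + e * y))) / (x * y) ^ 2 := by
  have hid : HasDerivAt (fun s : ℝ => s) 1 x := hasDerivAt_id x
  have hsq : HasDerivAt (fun s : ℝ => s ^ 2) (2 * x) x := by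
    simpa using hasDerivAt_pow 2 x
  have hnum : HasDerivAt
      (fun s : ℝ => a * f + (a + b * f) * s + (f + a * e) * y + b * s ^ 2 + e * y ^ 2 +
        c * s ^ 2 * y + d * s * y ^ 2)
      ((a + b * f) * 1 + b * (2 * x) + c * (2 * x) * y + d * 1 * y ^ 2) x := by
    have h := ((((((hasDerivAt_const x (a * f)).add (hid.const_mul (a + b * f))).add
      (hasDerivAt_const x ((f + a * e) * y))).add (hsq.const_mul b)).add
      (hasDerivAt_const x (e * y ^ 2))).add ((hsq.const_mul c).mul_const y)).add
      ((hid.const_mul d).mul_const (y ^ 2))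
    exact h.congr_deriv (by ring)
  have hden : HasDerivAt (fun s : ℝ => s * y) (1 * y) x := hid.mul_const y
  have hdiv := hnum.div hden (mul_ne_zero hx hy)
  have h2 : deriv (fun s => lynessV a b c d e f s y) x =
      (((a + b * f) * 1 + b * (2 * x) + c * (2 * x) * y + d * 1 * y ^ 2) * (x * y) -
        (a * f + (a + b * f) * x + (f + a * e) * y + b * x ^ 2 + e * y ^ 2 +
          c * x ^ 2 * y + d * x * y ^ 2) * (1 * y)) / (x * y) ^ 2 := hdiv.deriv
  rw [h2]; ring

lemma lynessV_derivY (a b c d e f x y : ℝ) (hx : x ≠ 0) (hy : y ≠ 0) :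
    deriv (fun s => lynessV a b c d e f x s) y
      = (x * (y ^ 2 * (e + d * x) - (f + x) * (a + b * x))) / (x * y) ^ 2 := by
  have hid : HasDerivAt (fun s : ℝ => s) 1 y := hasDerivAt_id y
  have hsq : HasDerivAt (fun s : ℝ => s ^ 2) (2 * y) y := by
    simpa using hasDerivAt_pow 2 y
  have hnum : HasDerivAt
      (fun s : ℝ => a * f + (a + b * f) * x + (f + a * e) * s + b * x ^ 2 + e * s ^ 2 +
        c * x ^ 2 * s + d * x * s ^ 2)
      (0 + 0 + (f + a * e) * 1 + 0 + e * (2 * y) + (c * x ^ 2) * 1 + (d * x) * (2 * y)) y := by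
    exact ((((((hasDerivAt_const y (a * f)).add (hasDerivAt_const y ((a + b * f) * x))).add
      (hid.const_mul (f + a * e))).add (hasDerivAt_const y (b * x ^ 2))).add
      (hsq.const_mul e)).add (hid.const_mul (c * x ^ 2))).add (hsq.const_mul (d * x))
  have hden : HasDerivAt (fun s : ℝ => x * s) (x * 1) y := hid.const_mul x
  have hdiv := hnum.div hden (mul_ne_zero hx hy)
  have h2 : deriv (fun s => lynessV a b c d e f x s) y =
      ((0 + 0 + (f + a * e) * 1 + 0 + e * (2 * y) + (c * x ^ 2) * 1 + (d * x) * (2 * y)) * (x * y) -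
        (a * f + (a + b * f) * x + (f + a * e) * y + b * x ^ 2 + e * y ^ 2 +
          c * x ^ 2 * y + d * x * y ^ 2) * (x * 1)) / (x * y) ^ 2 := hdiv.deriv
  rw [h2]; ring

/-- Lemma 10 (iii) of the paper: in the open first quadrant, the fixed points of
`F_{f,e,d,c,b,a} = F_f ∘ F_e ∘ F_d ∘ F_c ∘ F_b ∘ F_a` are exactly the critical points of
`V_{f,e,d,c,b,a}`, and both sets are described by the equations
`y²(e+dx) = (f+x)(a+bx)`, `x²(b+cy) = (a+y)(f+ey)`; moreover there is at least one fixed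
point in the open first quadrant. -/
theorem lyness_six_composition_fixed_points
    (a b c d e f : ℝ)
    (ha : 0 < a) (hb : 0 < b) (hc : 0 < c) (hd : 0 < d) (he : 0 < e) (hf : 0 < f) :
    (∀ x y : ℝ, 0 < x → 0 < y →
      (((lyness f ∘ lyness e ∘ lyness d ∘ lyness c ∘ lyness b ∘ lyness a) (x, y) = (x, y) ↔
          deriv (fun s => lynessV a b c d e f s y) x = 0 ∧
            deriv (fun s => lynessV a b c d e f x s) y = 0) ∧
        ((lyness f ∘ lyness e ∘ lyness d ∘ lyness c ∘ lyness b ∘ lyness a) (x, y) = (x, y) ↔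
          y ^ 2 * (e + d * x) = (f + x) * (a + b * x) ∧
            x ^ 2 * (b + c * y) = (a + y) * (f + e * y)))) ∧
    (∃ p : ℝ × ℝ, 0 < p.1 ∧ 0 < p.2 ∧
        (lyness f ∘ lyness e ∘ lyness d ∘ lyness c ∘ lyness b ∘ lyness a) p = p) := by
  constructor
  · intro x y hx hy
    have hfix := lyness_fixed_iff a b c d e f x y ha hb hc hd hf hx hy
    have hne2 : ((x * y) ^ 2) ≠ 0 := by positivity
    have hdx : deriv (fun s => lynessV a b c d e f s y) x = 0 ↔
        x ^ 2 * (b + c * y) = (a + y) * (f + e * y) := by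
      rw [lynessV_derivX a b c d e f x y hx.ne' hy.ne', div_eq_zero_iff, mul_eq_zero,
        sub_eq_zero]
      simp [hy.ne', hne2]
    have hdy : deriv (fun s => lynessV a b c d e f x s) y = 0 ↔
        y ^ 2 * (e + d * x) = (f + x) * (a + b * x) := by
      rw [lynessV_derivY a b c d e f x y hx.ne' hy.ne', div_eq_zero_iff, mul_eq_zero,
        sub_eq_zero]
      simp [hx.ne', hne2]
    refine ⟨?_, hfix⟩
    rw [hfix, hdx, hdy]
    tauto
  · -- existence via IVT
    obtain ⟨g, hg⟩ : ∃ g : ℝ → ℝ, ∀ t, g t = Real.sqrt ((f + t) * (a + b * t) / (e + d * t)) :=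
      ⟨_, fun t => rfl⟩
    obtain ⟨H, hHdef⟩ : ∃ H : ℝ → ℝ,
        ∀ t, H t = t ^ 2 * (b + c * g t) - (a + g t) * (f + e * g t) := ⟨_, fun t => rfl⟩
    have hginner : ∀ t : ℝ, 0 ≤ t → 0 < (f + t) * (a + b * t) / (e + d * t) := by
      intro t ht
      have h1 : 0 < f + t := by linarith
      have h2 : 0 < a + b * t := by nlinarith
      have h3 : 0 < e + d * t := by nlinarith
      positivity
    have hgpos : ∀ t : ℝ, 0 ≤ t → 0 < g t := by
      intro t ht
      rw [hg t]
      exact Real.sqrt_pos.mpr (hginner t ht)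
    have hgsq : ∀ t : ℝ, 0 ≤ t → (g t) ^ 2 * (e + d * t) = (f + t) * (a + b * t) := by
      intro t ht
      have h3 : (0:ℝ) < e + d * t := by nlinarith
      rw [hg t, Real.sq_sqrt (le_of_lt (hginner t ht))]
      exact div_mul_cancel₀ _ h3.ne'
    obtain ⟨K0, hK0⟩ : ∃ t : ℝ, t = a * f + a * e + f := ⟨_, rfl⟩
    obtain ⟨K1, hK1⟩ : ∃ t : ℝ, t = a * e + f + e := ⟨_, rfl⟩
    obtain ⟨M, hM⟩ : ∃ t : ℝ,
        t = max (max f (a / b)) (max 1 ((K0 * d + 4 * b * K1) / (b * d))) := ⟨_, rfl⟩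
    have hK0pos : 0 < K0 := by rw [hK0]; positivity
    have hK1pos : 0 < K1 := by rw [hK1]; positivity
    have hMf : f ≤ M := by rw [hM]; exact le_trans (le_max_left _ _) (le_max_left _ _)
    have hMa : a ≤ b * M := by
      have h : a / b ≤ M := by
        rw [hM]; exact le_trans (le_max_right f (a / b)) (le_max_left _ _)
      rw [div_le_iff₀ hb] at h
      linarith
    have hM1 : (1:ℝ) ≤ M := by
      rw [hM]; exact le_trans (le_max_left 1 _) (le_max_right _ _)
    have hMK : K0 * d + 4 * b * K1 ≤ b * d * M := by
      have h : (K0 * d + 4 * b * K1) / (b * d) ≤ M := by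
        rw [hM]; exact le_trans (le_max_right (1:ℝ) _) (le_max_right _ _)
      rw [div_le_iff₀ (by positivity : (0:ℝ) < b * d)] at h
      linarith
    have hM0 : (0:ℝ) < M := by linarith
    have hHM : 0 < H M := by
      have hY0 : 0 ≤ g M := (hgpos M hM0.le).le
      have hYp : 0 < g M := hgpos M hM0.le
      have hY2 : (g M) ^ 2 * (e + d * M) = (f + M) * (a + b * M) := hgsq M hM0.le
      have step1 : d * M * (g M) ^ 2 ≤ 4 * b * M ^ 2 := by
        nlinarith [sq_nonneg (g M), mul_pos he hM0]
      have step2 : d * (g M) ^ 2 ≤ 4 * b * M := by nlinarith [hM0]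
      have step3 : (a + g M) * (f + e * g M) ≤ K0 + K1 * (g M) ^ 2 := by
        rw [hK0, hK1]
        nlinarith [sq_nonneg (g M - 1), mul_pos ha he]
      have step4 : d * ((a + g M) * (f + e * g M)) ≤ d * K0 + K1 * (4 * b * M) := by
        have h1 := mul_le_mul_of_nonneg_left step3 hd.le
        have h2 := mul_le_mul_of_nonneg_left step2 hK1pos.le
        nlinarith [h1, h2]
      have step5 : d * K0 + K1 * (4 * b * M) ≤ b * d * M ^ 2 := by
        nlinarith [mul_le_mul_of_nonneg_right hMK hM0.le,
          mul_nonneg (mul_pos hd hK0pos).le (sub_nonneg.mpr hM1)]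
      have hbound : (a + g M) * (f + e * g M) ≤ b * M ^ 2 := by
        nlinarith [step4, step5, hd]
      have hcy : 0 < c * M ^ 2 * g M := by positivity
      rw [hHdef M]
      nlinarith [hbound, hcy]
    have hH0 : H 0 < 0 := by
      rw [hHdef 0]
      have hY0 : 0 < g 0 := hgpos 0 le_rfl
      nlinarith [mul_pos ha hf, mul_pos he hY0]
    have hgc : ContinuousOn g (Set.Icc 0 M) := by
      rw [show g = fun t => Real.sqrt ((f + t) * (a + b * t) / (e + d * t)) from funext hg]
      apply Real.continuous_sqrt.comp_continuousOn
      apply ContinuousOn.div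
      · exact ((continuous_const.add continuous_id).mul
          (continuous_const.add (continuous_const.mul continuous_id))).continuousOn
      · exact (continuous_const.add (continuous_const.mul continuous_id)).continuousOn
      · intro t ht
        have h0 : (0:ℝ) ≤ t := ht.1
        exact ne_of_gt (by nlinarith)
    have hHc : ContinuousOn H (Set.Icc 0 M) := by
      rw [show H = fun t => t ^ 2 * (b + c * g t) - (a + g t) * (f + e * g t) from
        funext hHdef]
      apply ContinuousOn.sub
      · exact ((continuous_pow 2).continuousOn.mul
          (continuousOn_const.add (continuousOn_const.mul hgc)))
      · exact ((continuousOn_const.add hgc).mul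
          (continuousOn_const.add (continuousOn_const.mul hgc)))
    have hIVT := intermediate_value_Icc hM0.le hHc
    have h0mem : (0:ℝ) ∈ Set.Icc (H 0) (H M) := ⟨hH0.le, hHM.le⟩
    obtain ⟨t0, ht0mem, ht0⟩ := hIVT h0mem
    have ht0nn : 0 ≤ t0 := ht0mem.1
    have ht0pos : 0 < t0 := by
      rcases lt_or_eq_of_le ht0nn with h | h
      · exact h
      · exfalso; rw [← h] at ht0; linarith
    have hy0pos : 0 < g t0 := hgpos t0 ht0nn
    have hp1 : (g t0) ^ 2 * (e + d * t0) = (f + t0) * (a + b * t0) := hgsq t0 ht0nn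
    have hp2 : t0 ^ 2 * (b + c * g t0) = (a + g t0) * (f + e * g t0) := by
      have h := ht0
      rw [hHdef t0] at h
      linarith
    refine ⟨(t0, g t0), ht0pos, hy0pos, ?_⟩
    exact (lyness_fixed_iff a b c d e f t0 (g t0) ha hb hc hd hf ht0pos hy0pos).mpr ⟨hp1, hp2⟩
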